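/- Let G be a simple graph without universal vertices and let s be a simplicial vertex of G. Then s is a universal vertex of the auxiliary graph G^s. -/

import Mathlib

/-- The closed neighborhood `N[v]` of a vertex. -/
def closedNbr {V : Type*} (G : SimpleGraph V) (v : V) : Set V := insert v (G.neighborSet v)

/-- A vertex is simplicial if its closed neighborhood is a clique. -/
def Simplicial {V : Type*} (G : SimpleGraph V) (s : V) : Prop := G.IsClique (closedNbr G s)

/-- A vertex is universal if it is adjacent to all other vertices. -/
def Universal {V : Type*} (G : SimpleGraph V) (v : V) : Prop := ∀ u, u ≠ v → G.Adj v u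

/-- The auxiliary graph `G^s` with respect to a simplicial vertex `s`. -/
def auxGraph {V : Type*} (G : SimpleGraph V) (s : V) : SimpleGraph V where
  Adj u v := u ≠ v ∧
    ((u ∉ closedNbr G s ∧ v ∉ closedNbr G s ∧ G.Adj u v) ∨
     (u ∈ closedNbr G s ∧ v ∈ closedNbr G s ∧ G.neighborSet u ∪ G.neighborSet v ≠ Set.univ) ∨
     (u ∈ closedNbr G s ∧ v ∉ closedNbr G s ∧ ¬ closedNbr G v ⊆ closedNbr G u) ∨
     (v ∈ closedNbr G s ∧ u ∉ closedNbr G s ∧ ¬ closedNbr G u ⊆ closedNbr G v))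
  symm := by
    constructor
    rintro u v ⟨hne, h⟩
    refine ⟨hne.symm, ?_⟩
    rcases h with ⟨h1, h2, h3⟩ | ⟨h1, h2, h3⟩ | h | h
    · exact Or.inl ⟨h2, h1, h3.symm⟩
    · exact Or.inr (Or.inl ⟨h2, h1, by rwa [Set.union_comm] at h3⟩)
    · exact Or.inr (Or.inr (Or.inr h))
    · exact Or.inr (Or.inr (Or.inl h))
  loopless := ⟨fun v h => h.1 rfl⟩

/-- A witness of an edge `uv` of `G^s`: a vertex `w ∉ N_G[s]` such that for each end `x`,
`w` is adjacent to `x` in `G` iff `x ∉ N_G[s]`. -/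
def EdgeWitness {V : Type*} (G : SimpleGraph V) (s u v w : V) : Prop :=
  w ∉ closedNbr G s ∧ (G.Adj w u ↔ u ∉ closedNbr G s) ∧ (G.Adj w v ↔ v ∉ closedNbr G s)

/-- An edge of `G^s` is collateral if it is an edge of `G` and one end is in `N_G[s]`. -/
def Collateral {V : Type*} (G : SimpleGraph V) (s u v : V) : Prop :=
  (auxGraph G s).Adj u v ∧ G.Adj u v ∧ (u ∈ closedNbr G s ∨ v ∈ closedNbr G s)

/-- A witness of a clique `K` of `G^s`: a vertex `w ∉ N_G[s]` such that `N_G[w] ∩ K` and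
`N_G[s] ∩ K` partition `K`. -/
def CliqueWitness {V : Type*} (G : SimpleGraph V) (s : V) (K : Set V) (w : V) : Prop :=
  w ∉ closedNbr G s ∧ ∀ x ∈ K, (x ∈ closedNbr G w ↔ x ∉ closedNbr G s)

/-- A graph is chordal if it has no induced cycle of length at least four. -/
def Chordal {V : Type*} (G : SimpleGraph V) : Prop :=
  ¬ ∃ (n : ℕ) (f : ZMod n → V), 4 ≤ n ∧ Function.Injective f ∧
      ∀ i j : ZMod n, G.Adj (f i) (f j) ↔ (j = i + 1 ∨ i = j + 1)

/-- If G has no universal vertex and s is simplicial, then s is universal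
in the auxiliary graph G^s. -/
theorem stmt_2 {V : Type*} [Fintype V] (G : SimpleGraph V) (s : V)
    (hno : ∀ v : V, ¬ Universal G v) (hs : Simplicial G s) :
    Universal (auxGraph G s) s := by
  
  intro u hu
  by_cases hcu : u ∈ closedNbr G s
  · refine ⟨(Ne.symm hu), Or.inr (Or.inl ⟨Set.mem_insert _ _, hcu, ?_⟩)⟩
    intro hUniv
    apply hno u
    intro x hx
    have hxmem : x ∈ G.neighborSet s ∪ G.neighborSet u := by rw [hUniv]; trivial
    rcases hxmem with hxs | hxu
    · -- x ∈ N(s); u ∈ N[s], x ∈ N[s], clique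
      have hus : u ∈ closedNbr G s := hcu
      have hxc : x ∈ closedNbr G s := Set.mem_insert_iff.2 (Or.inr hxs)
      exact hs hus hxc (Ne.symm hx)
    · exact hxu
  · refine ⟨Ne.symm hu, Or.inr (Or.inr (Or.inl ⟨Set.mem_insert _ _, hcu, ?_⟩))⟩
    intro hsub
    exact hcu (hsub (Set.mem_insert _ _))
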